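/- Let n ≥ 1 and q ≥ 1 be integers. For every x ∈ sl_n(ℂ), one has (ad x)^{2q} = 0 if and only if x^q = 0. -/

import Mathlib

open LieAlgebra.SpecialLinear

namespace Statement9Aux

set_option maxHeartbeats 1000000

open Matrix

attribute [local instance 100] LieRing.ofAssociativeRing

variable {n : ℕ}

abbrev M (n : ℕ) := Matrix (Fin n) (Fin n) ℂ

lemma ad_pow_apply (N : ℕ) (A y : M n) :
    ((LieAlgebra.ad ℂ (M n) A) ^ N) y =
      ∑ k ∈ Finset.range (N + 1),
        ((-1 : ℂ) ^ (N - k) * N.choose k) • (A ^ k * y * A ^ (N - k)) := by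
  have had : LieAlgebra.ad ℂ (M n) A
      = LinearMap.mulLeft ℂ A + -(LinearMap.mulRight ℂ A) := by
    have := congrFun (LieAlgebra.ad_eq_lmul_left_sub_lmul_right (R := ℂ) (M n)) A
    simpa [sub_eq_add_neg] using this
  have hc : Commute (LinearMap.mulLeft ℂ A) (-(LinearMap.mulRight ℂ A)) :=
    (LinearMap.commute_mulLeft_right (R:=ℂ) A A).neg_right
  rw [had, hc.add_pow N]
  rw [LinearMap.sum_apply]
  refine Finset.sum_congr rfl fun k hk => ?_
  have hneg : (-(LinearMap.mulRight ℂ A)) ^ (N - k)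
      = ((-1 : ℂ) ^ (N - k)) • LinearMap.mulRight ℂ (A ^ (N - k)) := by
    rw [← LinearMap.pow_mulRight, ← neg_one_smul ℂ (LinearMap.mulRight ℂ A), smul_pow]
  rw [Module.End.mul_apply, Module.End.mul_apply, Module.End.natCast_apply, hneg,
    LinearMap.smul_apply, LinearMap.pow_mulLeft]
  simp [LinearMap.mulLeft_apply, LinearMap.mulRight_apply, smul_smul,
    ← Nat.cast_smul_eq_nsmul ℂ, Algebra.mul_smul_comm, Algebra.smul_mul_assoc,
    mul_assoc, mul_comm]

open LieAlgebra.SpecialLinear in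
lemma coe_ad_pow (x : sl (Fin n) ℂ) (k : ℕ) (y : sl (Fin n) ℂ) :
    (((LieAlgebra.ad ℂ (sl (Fin n) ℂ) x) ^ k) y : M n)
      = ((LieAlgebra.ad ℂ (M n) (x : M n)) ^ k) (y : M n) := by
  induction k generalizing y with
  | zero => simp
  | succ k ih =>
    rw [pow_succ, Module.End.mul_apply, pow_succ, Module.End.mul_apply, ih]
    congr 1

open LieAlgebra.SpecialLinear in
lemma mem_sl_iff (hn : 1 ≤ n) (z : M n) : z ∈ sl (Fin n) ℂ ↔ Matrix.trace z = 0 := by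
  exact Iff.rfl

open LieAlgebra.SpecialLinear in
lemma ad_matrix_pow_eq_zero (hn : 1 ≤ n) (hq : 1 ≤ q') (x : sl (Fin n) ℂ)
    (h : (LieAlgebra.ad ℂ (sl (Fin n) ℂ) x) ^ q' = 0) :
    (LieAlgebra.ad ℂ (M n) (x : M n)) ^ q' = 0 := by
  refine LinearMap.ext fun z => ?_
  set c : ℂ := Matrix.trace z / n with hc
  have h1 : Matrix.trace (z - c • (1 : M n)) = 0 := by
    have hn0 : (n : ℂ) ≠ 0 := by exact_mod_cast (Nat.pos_of_ne_zero (by omega)).ne'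
    simp [Matrix.trace_smul, Matrix.trace_one, hc]
    field_simp
    simp
  have h2 : ((LieAlgebra.ad ℂ (M n) (x : M n)) ^ q') (z - c • (1 : M n)) = 0 := by
    have := coe_ad_pow x q' ⟨z - c • (1 : M n), (mem_sl_iff hn _).mpr h1⟩
    rw [h] at this
    simpa using this.symm
  have h3 : ((LieAlgebra.ad ℂ (M n) (x : M n)) ^ q') (1 : M n) = 0 := by
    obtain ⟨k, rfl⟩ : ∃ k, q' = k + 1 := ⟨q' - 1, by omega⟩
    rw [pow_succ, Module.End.mul_apply]
    have : (LieAlgebra.ad ℂ (M n) (x : M n)) (1 : M n) = 0 := by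
      simp [LieAlgebra.ad_apply, LieRing.of_associative_ring_bracket]
    rw [this, map_zero]
  have h4 : ((LieAlgebra.ad ℂ (M n) (x : M n)) ^ q') (c • (1 : M n)) = 0 := by
    rw [_root_.map_smul, h3, smul_zero]
  have hz : z = (z - c • (1 : M n)) + c • (1 : M n) := (sub_add_cancel z _).symm
  rw [LinearMap.zero_apply, hz, map_add, h2, h4, add_zero]

open Polynomial in
lemma eval_charpoly_eq (A : M n) (t : ℂ) :
    (Matrix.charpoly A).eval t = Matrix.det (t • (1 : M n) - A) := by
  rw [Matrix.charpoly, ← Polynomial.coe_evalRingHom, RingHom.map_det]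
  congr 1
  ext i j
  rcases eq_or_ne i j with rfl | hij
  · simp [Matrix.charmatrix_apply_eq, Matrix.one_apply]
  · simp [Matrix.charmatrix_apply_ne _ _ _ hij, Matrix.one_apply_ne hij]

lemma pow_apply_eigen (f : Module.End ℂ (M n)) (c : ℂ) (y : M n) (hy : f y = c • y) (N : ℕ) :
    (f ^ N) y = c ^ N • y := by
  induction N with
  | zero => simp
  | succ N ih =>
    rw [pow_succ, Module.End.mul_apply, hy, _root_.map_smul, ih, smul_smul, ← pow_succ']

open Polynomial in
lemma roots_all_eq {N : ℕ} (A : M n) (h : (LieAlgebra.ad ℂ (M n) A) ^ N = 0)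
    {lam mu : ℂ} (hl : lam ∈ A.charpoly.roots) (hmu : mu ∈ A.charpoly.roots) : lam = mu := by
  rw [Polynomial.mem_roots (Matrix.charpoly_monic A).ne_zero, Polynomial.IsRoot.def,
    eval_charpoly_eq] at hl hmu
  obtain ⟨v, hv0, hv⟩ := Matrix.exists_mulVec_eq_zero_iff.mpr hl
  obtain ⟨w, hw0, hw⟩ := Matrix.exists_vecMul_eq_zero_iff.mpr hmu
  have hv' : A *ᵥ v = lam • v := by
    rw [Matrix.sub_mulVec, Matrix.smul_mulVec, Matrix.one_mulVec, sub_eq_zero] at hv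
    exact hv.symm
  have hw' : w ᵥ* A = mu • w := by
    have hsc : w ᵥ* (mu • (1 : M n)) = mu • w := by
      rw [← Matrix.mulVec_transpose, Matrix.transpose_smul, Matrix.transpose_one,
        Matrix.smul_mulVec, Matrix.one_mulVec]
    rw [Matrix.vecMul_sub, hsc, sub_eq_zero] at hw
    exact hw.symm
  set y : M n := Matrix.vecMulVec v w with hy
  have hAy : A * y = lam • y := by
    ext i j
    simp only [hy, Matrix.mul_apply, Matrix.vecMulVec_apply, Matrix.smul_apply, smul_eq_mul]
    calc ∑ k, A i k * (v k * w j) = (∑ k, A i k * v k) * w j := by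
          rw [Finset.sum_mul]; exact Finset.sum_congr rfl fun k _ => by ring
      _ = (A *ᵥ v) i * w j := rfl
      _ = lam * (v i * w j) := by rw [hv']; simp [mul_assoc]
  have hyA : y * A = mu • y := by
    ext i j
    simp only [hy, Matrix.mul_apply, Matrix.vecMulVec_apply, Matrix.smul_apply, smul_eq_mul]
    calc ∑ k, v i * w k * A k j = v i * ∑ k, w k * A k j := by
          rw [Finset.mul_sum]; exact Finset.sum_congr rfl fun k _ => by ring
      _ = v i * (w ᵥ* A) j := rfl
      _ = mu * (v i * w j) := by rw [hw']; simp; ring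
  have hady : (LieAlgebra.ad ℂ (M n) A) y = (lam - mu) • y := by
    rw [LieAlgebra.ad_apply, LieRing.of_associative_ring_bracket, hAy, hyA, sub_smul]
  have h0 : ((lam - mu) ^ N) • y = 0 := by
    rw [← pow_apply_eigen _ _ _ hady, h, LinearMap.zero_apply]
  have hy0 : y ≠ 0 := by
    obtain ⟨i, hi⟩ := Function.ne_iff.mp hv0
    obtain ⟨j, hj⟩ := Function.ne_iff.mp hw0
    intro hcon
    have : v i * w j = 0 := by
      have := congrFun (congrFun hcon i) j
      simpa [hy, Matrix.vecMulVec_apply] using this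
    exact mul_ne_zero hi hj this
  have hpow : (lam - mu) ^ N = 0 := by
    by_contra hne
    apply hy0
    have h1 := congrArg (fun z => ((lam - mu) ^ N)⁻¹ • z) h0
    simpa [smul_smul, inv_mul_cancel₀ hne] using h1
  exact sub_eq_zero.mp (pow_eq_zero_iff'.mp hpow).1

open Polynomial in
lemma pow_card_eq_zero (hn : 1 ≤ n) (A : M n) (htr : Matrix.trace A = 0)
    {N : ℕ} (hN : (LieAlgebra.ad ℂ (M n) A) ^ N = 0) : A ^ n = 0 := by
  have hsplits := IsAlgClosed.splits A.charpoly
  have hcard : Multiset.card A.charpoly.roots = n := by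
    have h1 := hsplits.natDegree_eq_card_roots
    rw [← h1, Matrix.charpoly_natDegree_eq_dim, Fintype.card_fin]
  obtain ⟨lam0, hlam0⟩ := Multiset.card_pos_iff_exists_mem.mp (by rw [hcard]; omega)
  have hall : ∀ z ∈ A.charpoly.roots, z = lam0 := fun z hz => roots_all_eq A hN hz hlam0
  have hrep : A.charpoly.roots = Multiset.replicate n lam0 := by
    exact Multiset.eq_replicate.mpr ⟨hcard, hall⟩
  have hlam0_0 : lam0 = 0 := by
    have h2 := Matrix.trace_eq_sum_roots_charpoly A
    rw [htr, hrep, Multiset.sum_replicate] at h2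
    have hn0 : (n : ℂ) ≠ 0 := by exact_mod_cast (Nat.pos_of_ne_zero (by omega)).ne'
    rcases mul_eq_zero.mp (show (n : ℂ) * lam0 = 0 by rw [← nsmul_eq_mul]; exact h2.symm)
      with h | h
    · exact absurd h hn0
    · exact h
  have hchar : A.charpoly = X ^ n := by
    rw [hsplits.eq_prod_roots_of_monic (Matrix.charpoly_monic A), hrep, hlam0_0]
    simp [Multiset.map_replicate, Multiset.prod_replicate]
  have h3 := Matrix.aeval_self_charpoly A
  rw [hchar] at h3
  simpa using h3

open scoped Classical in
lemma conv_main {q : ℕ} (hn : 1 ≤ n) (hq : 1 ≤ q) (A : M n) (htr : Matrix.trace A = 0)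
    (hN : (LieAlgebra.ad ℂ (M n) A) ^ (2 * q) = 0) : A ^ q = 0 := by
  have hAn : A ^ n = 0 := pow_card_eq_zero hn A htr hN
  by_contra hq0
  have hex : ∃ k, A ^ k = 0 := ⟨n, hAn⟩
  set m := Nat.find hex with hmdef
  have hm : A ^ m = 0 := Nat.find_spec hex
  have hqm : q < m := by
    by_contra hc
    exact hq0 (pow_eq_zero_of_le (by omega) hm)
  have hB0 : A ^ (m - 1) ≠ 0 := Nat.find_min hex (by omega)
  set B := A ^ (m - 1) with hBdef
  set N := 2 * (m - 1) with hNdef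
  have hfN : (LieAlgebra.ad ℂ (M n) A) ^ N = 0 := by
    have : N = 2 * q + (N - 2 * q) := by omega
    rw [this, pow_add, hN, zero_mul]
  obtain ⟨a, b, hab⟩ : ∃ a b, B a b ≠ 0 := by
    by_contra hc
    push_neg at hc
    exact hB0 (Matrix.ext fun i j => hc i j)
  have hsum := ad_pow_apply N A (Matrix.single b a (1 : ℂ))
  rw [hfN, LinearMap.zero_apply] at hsum
  have hone : ∀ k ∈ Finset.range (N + 1), k ≠ m - 1 →
      ((-1 : ℂ) ^ (N - k) * (N.choose k)) •
        (A ^ k * Matrix.single b a (1 : ℂ) * A ^ (N - k)) = 0 := by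
    intro k hk hkne
    rcases le_or_gt m k with h | h
    · rw [pow_eq_zero_of_le h hm, zero_mul, Matrix.zero_mul, smul_zero]
    · have : m ≤ N - k := by omega
      rw [pow_eq_zero_of_le this hm, Matrix.mul_zero, smul_zero]
  have hmem : m - 1 ∈ Finset.range (N + 1) := by
    simp only [Finset.mem_range]; omega
  have hsingle := Finset.sum_eq_single_of_mem (m - 1) hmem hone
  rw [hsingle] at hsum
  have hNm : N - (m - 1) = m - 1 := by omega
  rw [hNm] at hsum
  have hcne : ((-1 : ℂ) ^ (m - 1) * ((N.choose (m - 1) : ℕ) : ℂ)) ≠ 0 := by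
    apply mul_ne_zero (pow_ne_zero _ (by norm_num))
    exact_mod_cast (Nat.choose_pos (by omega : m - 1 ≤ N)).ne'
  have hBEB : B * Matrix.single b a (1 : ℂ) * B = 0 := by
    rcases smul_eq_zero.mp hsum.symm with h | h
    · exact absurd h hcne
    · exact h
  have hentry : (B * Matrix.single b a (1 : ℂ) * B) a b = B a b * B a b := by
    simp [Matrix.mul_apply, Matrix.single, ite_and, Finset.sum_mul, Finset.mul_sum]
  rw [hBEB] at hentry
  exact mul_ne_zero hab hab (by simpa using hentry.symm)

end Statement9Aux

open Statement9Aux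

/-- Let `n ≥ 1` and `q ≥ 1` be integers.  For every `x ∈ sl_n(ℂ)`, one has
`(ad x)^{2q} = 0` if and only if `x^q = 0`. -/
theorem statement9 (n q : ℕ) (hn : 1 ≤ n) (hq : 1 ≤ q)
    (x : sl (Fin n) ℂ) :
    (LieAlgebra.ad ℂ (sl (Fin n) ℂ) x) ^ (2 * q) = 0 ↔
      (x : Matrix (Fin n) (Fin n) ℂ) ^ q = 0 := by
  constructor
  · intro h
    have h2 := ad_matrix_pow_eq_zero hn (by omega) x h
    exact conv_main hn hq _ ((mem_sl_iff hn _).mp x.2) h2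
  · intro h
    refine LinearMap.ext fun y => ?_
    apply Subtype.ext
    rw [LinearMap.zero_apply]
    have hcoe := coe_ad_pow x (2 * q) y
    rw [hcoe, ad_pow_apply]
    rw [show ((0 : sl (Fin n) ℂ) : M n) = 0 from rfl]
    apply Finset.sum_eq_zero
    intro k hk
    rcases le_or_gt q k with hle | hlt
    · rw [pow_eq_zero_of_le hle h, zero_mul, Matrix.zero_mul, smul_zero]
    · have : q ≤ 2 * q - k := by
        have := Finset.mem_range.mp hk
        omega
      rw [pow_eq_zero_of_le this h, Matrix.mul_zero, smul_zero]
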